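/- Let c_p, c_s ∈ ℝ with c_s > 0 and 3c_p² > 4c_s², and set a = (c_p²−c_s²)/(c_s²(3c_p²−4c_s²)), b = −(c_p²−2c_s²)/(2c_s²(3c_p²−4c_s²)), c = 1/c_s². Then the 6×6 real symmetric matrix G whose upper-left 3×3 block is [[a,b,b],[b,a,b],[b,b,a]], whose lower-right 3×3 block is c·I₃, and whose off-diagonal blocks vanish, is positive definite. -/

import Mathlib

open Matrix

private lemma sq_sum_three_zero (u v w : ℝ) (h : u ^ 2 + v ^ 2 + w ^ 2 ≤ 0) :
    u = 0 ∧ v = 0 ∧ w = 0 := by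
  refine ⟨?_, ?_, ?_⟩ <;>
    refine pow_eq_zero_iff two_ne_zero |>.mp (le_antisymm ?_ (sq_nonneg _)) <;>
    nlinarith [sq_nonneg u, sq_nonneg v, sq_nonneg w]

private lemma symmetrizer_key (a b c x0 x1 x2 y0 y1 y2 : ℝ)
    (hab' : 0 < a - b) (ha2b' : 0 < a + 2 * b) (hc' : 0 < c)
    (hne : 0 < x0 ^ 2 + x1 ^ 2 + x2 ^ 2 ∨ 0 < y0 ^ 2 + y1 ^ 2 + y2 ^ 2) :
    0 < (a + 2*b)/3 * (x0 + x1 + x2)^2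
        + (a - b)/3 * ((x0 - x1)^2 + (x1 - x2)^2 + (x0 - x2)^2)
        + c * (y0^2 + y1^2 + y2^2) := by
  have h1 : (0:ℝ) ≤ (a + 2*b)/3 * (x0 + x1 + x2)^2 := by positivity
  have h2 : (0:ℝ) ≤ (a - b)/3 * ((x0 - x1)^2 + (x1 - x2)^2 + (x0 - x2)^2) := by positivity
  have h3 : (0:ℝ) ≤ c * (y0^2 + y1^2 + y2^2) := by positivity
  rcases hne with hx | hy
  · by_cases hs : x0 + x1 + x2 = 0
    · have hid : (x0 - x1)^2 + (x1 - x2)^2 + (x0 - x2)^2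
          = 3*(x0^2 + x1^2 + x2^2) - (x0 + x1 + x2)^2 := by ring
      have hd : 0 < (x0 - x1)^2 + (x1 - x2)^2 + (x0 - x2)^2 := by
        rw [hid, hs]; nlinarith
      have := mul_pos (by positivity : (0:ℝ) < (a - b)/3) hd
      linarith
    · have hs2 : 0 < (x0 + x1 + x2)^2 := by positivity
      have := mul_pos (by positivity : (0:ℝ) < (a + 2*b)/3) hs2
      linarith
  · have := mul_pos hc' hy
    linarith

/-- Positive definiteness of `G = ρ C⁻¹`, the upper-left block of the
symmetrizer `Ã₀` of the velocity-stress elastic wave equations. -/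
theorem symmetrizer_block_posDef (cp cs : ℝ) (hcs : 0 < cs)
    (hden : 4 * cs ^ 2 < 3 * cp ^ 2)
    (a b c : ℝ)
    (ha : a = (cp ^ 2 - cs ^ 2) / (cs ^ 2 * (3 * cp ^ 2 - 4 * cs ^ 2)))
    (hb : b = -(cp ^ 2 - 2 * cs ^ 2) / (2 * cs ^ 2 * (3 * cp ^ 2 - 4 * cs ^ 2)))
    (hc : c = 1 / cs ^ 2)
    (G : Matrix (Fin 3 ⊕ Fin 3) (Fin 3 ⊕ Fin 3) ℝ)
    (hG : G = Matrix.fromBlocks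
      !![a, b, b; b, a, b; b, b, a]
      0 0 (c • (1 : Matrix (Fin 3) (Fin 3) ℝ))) :
    G.PosDef := by
  have hcs2 : (0:ℝ) < cs ^ 2 := by positivity
  have hD : (0:ℝ) < 3 * cp ^ 2 - 4 * cs ^ 2 := by linarith
  have hab : a - b = 1 / (2 * cs ^ 2) := by
    rw [ha, hb]; rw [div_sub_div _ _ (by positivity) (by positivity), div_eq_div_iff (by positivity) (by positivity)]; ring
  have ha2b : a + 2 * b = 1 / (3 * cp ^ 2 - 4 * cs ^ 2) := by
    rw [ha, hb]; field_simp; ring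
  have hab' : (0:ℝ) < a - b := by rw [hab]; positivity
  have ha2b' : (0:ℝ) < a + 2 * b := by rw [ha2b]; positivity
  have hc' : (0:ℝ) < c := by rw [hc]; positivity
  clear ha hb hc hab ha2b hden hcs hcs2 hD
  rw [Matrix.posDef_iff_dotProduct_mulVec]
  constructor
  · rw [hG]
    ext (i | i) (j | j) <;> fin_cases i <;> fin_cases j <;>
      simp [Matrix.conjTranspose_apply, Matrix.fromBlocks, Matrix.vecHead, Matrix.vecTail]
  · intro x hx
    rw [hG]
    have hform : dotProduct (star x) ((Matrix.fromBlocks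
        !![a, b, b; b, a, b; b, b, a]
        0 0 (c • (1 : Matrix (Fin 3) (Fin 3) ℝ))) *ᵥ x)
        = (a + 2*b)/3 * (x (.inl 0) + x (.inl 1) + x (.inl 2))^2
          + (a - b)/3 * ((x (.inl 0) - x (.inl 1))^2 + (x (.inl 1) - x (.inl 2))^2
              + (x (.inl 0) - x (.inl 2))^2)
          + c * ((x (.inr 0))^2 + (x (.inr 1))^2 + (x (.inr 2))^2) := by
      simp [dotProduct, Matrix.mulVec, Fintype.sum_sum_type, Fin.sum_univ_three,
        Matrix.fromBlocks, Matrix.vecHead, Matrix.vecTail]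
      ring
    rw [hform]
    refine symmetrizer_key a b c _ _ _ _ _ _ hab' ha2b' hc' ?_
    by_contra hcon
    push_neg at hcon
    obtain ⟨h1, h2⟩ := hcon
    obtain ⟨e0, e1, e2⟩ := sq_sum_three_zero _ _ _ h1
    obtain ⟨f0, f1, f2⟩ := sq_sum_three_zero _ _ _ h2
    apply hx
    funext i
    rcases i with i | i <;> fin_cases i <;> assumption
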